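/- Let q1, q2, q3, q4 be four points in the Euclidean plane ℝ² with q2 − q1 = t • (q3 − q4) for some t > 0 and q1, q2, q4 not collinear; let r_ij denote their mutual distances, and assume r24 > r12 and r12 ≥ r34. Then r23²/r14² ≥ r34/r12, and equality holds if and only if the trapezoid is a parallelogram with r12 = r34 and r23 = r14. -/

import Mathlib

set_option maxHeartbeats 1000000 in
theorem legs_bases_ratio_inequality
    (q1 q2 q3 q4 : EuclideanSpace ℝ (Fin 2)) (t : ℝ)
    (ht : 0 < t) (hpar : q2 - q1 = t • (q3 - q4))
    (hncol : ¬ Collinear ℝ ({q1, q2, q4} : Set (EuclideanSpace ℝ (Fin 2))))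
    (h24 : dist q1 q2 < dist q2 q4) (h1234 : dist q3 q4 ≤ dist q1 q2) :
    dist q3 q4 / dist q1 q2 ≤ dist q2 q3 ^ 2 / dist q1 q4 ^ 2 ∧
      (dist q2 q3 ^ 2 / dist q1 q4 ^ 2 = dist q3 q4 / dist q1 q2 ↔
        dist q1 q2 = dist q3 q4 ∧ dist q2 q3 = dist q1 q4) := by
  have h12 : q1 ≠ q2 := by
    rintro rfl
    apply hncol
    have hs : ({q1, q1, q4} : Set (EuclideanSpace ℝ (Fin 2))) = {q1, q4} := by
      ext x; simp only [Set.mem_insert_iff, Set.mem_singleton_iff]; tauto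
    rw [hs]; exact collinear_pair ℝ q1 q4
  have h14 : q1 ≠ q4 := by
    rintro rfl
    apply hncol
    have hs : ({q1, q2, q1} : Set (EuclideanSpace ℝ (Fin 2))) = {q1, q2} := by
      ext x; simp only [Set.mem_insert_iff, Set.mem_singleton_iff]; tauto
    rw [hs]; exact collinear_pair ℝ q1 q2
  set v := q3 - q4 with hv
  set d := q3 - q2 with hd
  have hvne : v ≠ 0 := by
    intro h0
    apply h12
    have : q2 - q1 = 0 := by rw [hpar, h0, smul_zero]
    exact (sub_eq_zero.mp this).symm
  have hVpos : 0 < ‖v‖ := norm_pos_iff.mpr hvne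
  -- distance identities
  have e12 : dist q1 q2 = t * ‖v‖ := by
    rw [dist_eq_norm, ← norm_neg, neg_sub, hpar, norm_smul, Real.norm_eq_abs,
      abs_of_pos ht]
  have e34 : dist q3 q4 = ‖v‖ := by rw [dist_eq_norm]
  have e23 : dist q2 q3 = ‖d‖ := by rw [dist_eq_norm, ← norm_neg, neg_sub]
  have e24 : dist q2 q4 = ‖v - d‖ := by
    rw [dist_eq_norm]
    congr 1
    rw [hv, hd]; abel
  have e14 : dist q1 q4 = ‖d + (t - 1) • v‖ := by
    rw [dist_eq_norm, ← norm_neg, neg_sub]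
    congr 1
    rw [hd, sub_smul, one_smul, ← hpar, hv]; abel
  have ht1 : 1 ≤ t := by
    rw [e34, e12] at h1234
    nlinarith
  have hEpos : 0 < ‖d + (t - 1) • v‖ := by
    rw [← e14]
    exact dist_pos.mpr h14
  set D := ‖d‖ ^ 2 with hD
  set V := ‖v‖ ^ 2 with hV
  set I := (inner ℝ d v : ℝ) with hI
  have hVpos2 : 0 < V := by positivity
  have hEexp : ‖d + (t - 1) • v‖ ^ 2 = D + 2 * (t - 1) * I + (t - 1) ^ 2 * V := by
    rw [norm_add_sq_real, real_inner_smul_right, norm_smul, Real.norm_eq_abs,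
      mul_pow, sq_abs]
    ring
  have h24' : t * ‖v‖ < ‖v - d‖ := by rw [← e12, ← e24]; exact h24
  have hkey : t ^ 2 * V < V - 2 * I + D := by
    have h1 : (t * ‖v‖) ^ 2 < ‖v - d‖ ^ 2 := by
      nlinarith [mul_pos ht hVpos, norm_nonneg (v - d)]
    rw [norm_sub_sq_real, real_inner_comm] at h1
    have h2 : (t * ‖v‖) ^ 2 = t ^ 2 * V := by rw [hV]; ring
    rw [← hI, ← hV, ← hD] at h1
    linarith
  have hgap : 0 < D - 2 * I - (t - 1) * V := by
    have h3 : 0 ≤ (t - 1) * t * V :=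
      mul_nonneg (mul_nonneg (by linarith) ht.le) hVpos2.le
    have hid : D - 2 * I - (t - 1) * V =
        (V - 2 * I + D - t ^ 2 * V) + (t - 1) * t * V := by ring
    linarith
  have hid2 : t * D - (D + 2 * (t - 1) * I + (t - 1) ^ 2 * V) =
      (t - 1) * (D - 2 * I - (t - 1) * V) := by ring
  have hmain : ‖d + (t - 1) • v‖ ^ 2 ≤ t * D := by
    have h5 : 0 ≤ (t - 1) * (D - 2 * I - (t - 1) * V) :=
      mul_nonneg (by linarith) hgap.le
    linarith
  constructor
  · rw [e34, e12, e23, e14]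
    rw [div_le_div_iff₀ (by positivity) (by positivity), ← hD]
    have h6 := mul_le_mul_of_nonneg_left hmain hVpos.le
    have hid3 : ‖v‖ * (t * D) = D * (t * ‖v‖) := by ring
    linarith
  · constructor
    · intro heq
      rw [e34, e12, e23, e14] at heq
      rw [div_eq_div_iff (by positivity) (by positivity), ← hD] at heq
      have hteq : t = 1 := by
        by_contra hne
        have ht1' : 1 < t := lt_of_le_of_ne ht1 (Ne.symm hne)
        have hlt : ‖d + (t - 1) • v‖ ^ 2 < t * D := by
          have h5' : 0 < (t - 1) * (D - 2 * I - (t - 1) * V) :=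
            mul_pos (by linarith) hgap
          linarith
        have h7 := mul_lt_mul_of_pos_left hlt hVpos
        have hid3 : ‖v‖ * (t * D) = D * (t * ‖v‖) := by ring
        linarith
      have hE1 : ‖d + (t - 1) • v‖ = ‖d‖ := by
        rw [hteq]; simp
      exact ⟨by rw [e12, e34, hteq, one_mul], by rw [e23, e14, hE1]⟩
    · rintro ⟨ha, hb⟩
      rw [e12, e34] at ha
      have hteq : t = 1 := by
        have h' : (t - 1) * ‖v‖ = 0 := by nlinarith
        rcases mul_eq_zero.mp h' with h | h
        · linarith
        · exact absurd h hVpos.ne'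
      have hE1 : ‖d + (t - 1) • v‖ = ‖d‖ := by
        rw [hteq]; simp
      have hdpos : 0 < ‖d‖ := by rw [← hE1]; exact hEpos
      rw [e23, e14, e34, e12, hE1, hteq, one_mul,
        div_self (pow_ne_zero 2 hdpos.ne'), div_self hVpos.ne']
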